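/- Let A_1A_2A_3 be a non-degenerate triangle in ℝ² and A_0 a point in its interior; write α_{i0j} = ∠A_iA_0A_j, so that α_{102} + α_{103} + α_{203} = 2π. Let c > 0, B̄_0 ≥ 0, and suppose B̄_1, B̄_2, B̄_3 > 0 satisfy B̄_1 + B̄_2 + B̄_3 = c, B̄_1 + B̄_2 = B̄_3 + B̄_0, and A_0 minimizes X ↦ Σ_{i=1}^3 B̄_i‖X − A_i‖. Then B̄_3 = (c − B̄_0)/2, B̄_2 = (sin α_{103}/sin α_{102})·(c − B̄_0)/2, and B̄_1 = −(sin(α_{103} + α_{102})/sin α_{102})·(c − B̄_0)/2 (which equals (sin α_{203}/sin α_{102})·(c − B̄_0)/2). In particular the weights are not determined by A_0 and c alone: they depend on the residual weight B̄_0 (negative answer to the inverse mixed weighted Fermat–Torricelli problem for three non-collinear points). -/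

import Mathlib

open EuclideanGeometry

private lemma inner_two (x y : EuclideanSpace ℝ (Fin 2)) :
    (inner ℝ x y : ℝ) = x 0 * y 0 + x 1 * y 1 := by
  simp [PiLp.inner_apply, Fin.sum_univ_two, RCLike.inner_apply, mul_comm]

private lemma hasFDerivAt_norm_sub (p x : EuclideanSpace ℝ (Fin 2)) (h : x - p ≠ 0) :
    HasFDerivAt (fun X : EuclideanSpace ℝ (Fin 2) => ‖X - p‖)
      (‖x - p‖⁻¹ • innerSL ℝ (x - p)) x := by
  have hn : ‖x - p‖ ≠ 0 := norm_ne_zero_iff.mpr h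
  have hg : HasFDerivAt (fun X : EuclideanSpace ℝ (Fin 2) => X - p)
      (ContinuousLinearMap.id ℝ _) x := (hasFDerivAt_id x).sub_const p
  have h2 : HasFDerivAt (fun X : EuclideanSpace ℝ (Fin 2) => ‖X - p‖ ^ 2)
      (2 • (innerSL ℝ (x - p)).comp (ContinuousLinearMap.id ℝ _)) x := hg.norm_sq
  have hs : HasDerivAt Real.sqrt (1 / (2 * Real.sqrt (‖x - p‖ ^ 2))) (‖x - p‖ ^ 2) :=
    Real.hasDerivAt_sqrt (by positivity)
  have key := hs.comp_hasFDerivAt x h2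
  have hfun : (Real.sqrt ∘ fun X : EuclideanSpace ℝ (Fin 2) => ‖X - p‖ ^ 2)
      = fun X : EuclideanSpace ℝ (Fin 2) => ‖X - p‖ := by
    funext y
    simp [Real.sqrt_sq (norm_nonneg _)]
  rw [hfun] at key
  refine key.congr_fderiv ?_
  ext y
  have : Real.sqrt (‖x - p‖ ^ 2) = ‖x - p‖ := Real.sqrt_sq (norm_nonneg _)
  simp [this]
  field_simp
private lemma cross_ne_zero_of_affineIndependent {A : Fin 3 → EuclideanSpace ℝ (Fin 2)}
    (hA : AffineIndependent ℝ A) :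
    (A 1 - A 0) 0 * (A 2 - A 0) 1 - (A 1 - A 0) 1 * (A 2 - A 0) 0 ≠ 0 := by
  intro hcross
  set d := A 1 - A 0 with hd
  set e := A 2 - A 0 with he
  rw [affineIndependent_iff_not_collinear] at hA
  apply hA
  have h0 : A 0 ∈ Set.range A := ⟨0, rfl⟩
  rw [collinear_iff_of_mem h0]
  by_cases hdz : d = 0
  · -- d = 0 : direction e
    refine ⟨e, ?_⟩
    rintro p ⟨i, rfl⟩
    fin_cases i
    · exact ⟨0, by show A 0 = (0:ℝ) • e +ᵥ A 0; simp⟩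
    · refine ⟨0, ?_⟩
      show A 1 = (0:ℝ) • e +ᵥ A 0
      have : A 1 = A 0 := by
        have := hdz
        rw [hd, sub_eq_zero] at this
        exact this
      simp [this]
    · refine ⟨1, ?_⟩
      show A 2 = (1:ℝ) • e +ᵥ A 0
      simp [he]
  · refine ⟨d, ?_⟩
    have hk : ∃ k : ℝ, e = k • d := by
      by_cases h0 : d 0 ≠ 0
      · refine ⟨e 0 / d 0, ?_⟩
        ext j
        fin_cases j
        · simp [PiLp.smul_apply]; field_simp
        · simp [PiLp.smul_apply]; field_simp; nlinarith [hcross]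
      · push_neg at h0
        have h1 : d 1 ≠ 0 := by
          intro h1
          apply hdz
          ext j
          fin_cases j <;> simp [h0, h1]
        refine ⟨e 1 / d 1, ?_⟩
        ext j
        fin_cases j
        · simp [PiLp.smul_apply]; field_simp; nlinarith [hcross]
        · simp [PiLp.smul_apply]; field_simp
    obtain ⟨k, hk⟩ := hk
    rintro p ⟨i, rfl⟩
    fin_cases i
    · exact ⟨0, by simp⟩
    · refine ⟨1, ?_⟩
      show A 1 = (1:ℝ) • d +ᵥ A 0
      simp [hd]
    · refine ⟨k, ?_⟩
      show A 2 = k • d +ᵥ A 0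
      have : A 2 = e + A 0 := by simp [he]
      rw [this, hk]
      simp
private lemma key_algebra (t0 t1 t2 n0 n1 n2 a0 a1 b0 b1 c0 c1 s01 s02 s12 co1 co2 : ℝ)
    (ht0 : 0 < t0) (ht1 : 0 < t1) (ht2 : 0 < t2)
    (hn0 : 0 < n0) (hn1 : 0 < n1) (hn2 : 0 < n2)
    (hP0 : t0*a0 + t1*b0 + t2*c0 = 0)
    (hP1 : t0*a1 + t1*b1 + t2*c1 = 0)
    (hNN0 : n0*n0 = a0*a0 + a1*a1)
    (hS01 : s01 * (n0*n1) = |a0*b1 - a1*b0|)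
    (hS02 : s02 * (n0*n2) = |a0*c1 - a1*c0|)
    (hS12 : s12 * (n1*n2) = |b0*c1 - b1*c0|)
    (hC01 : co1 * (n0*n1) = a0*b0 + a1*b1)
    (hC02 : co2 * (n0*n2) = a0*c0 + a1*c1)
    (hcross : (a0-b0)*(a1-c1) - (a1-b1)*(a0-c0) ≠ 0) :
    0 < s01 ∧ (t1*n1) * s01 = s02 * (t2*n2) ∧ (t0*n0) * s01 = s12 * (t2*n2) ∧
      s02*co1 + co2*s01 = -s12 := by
  have E1 : t1*(a0*b1 - a1*b0) + t2*(a0*c1 - a1*c0) = 0 := by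
    linear_combination a0*hP1 - a1*hP0
  have E2 : -(t0*(a0*b1 - a1*b0)) + t2*(b0*c1 - b1*c0) = 0 := by
    linear_combination b0*hP1 - b1*hP0
  have EIn : t0*(a0*a0+a1*a1) + t1*(a0*b0+a1*b1) + t2*(a0*c0+a1*c1) = 0 := by
    linear_combination a0*hP0 + a1*hP1
  have hW : a0*b1 - a1*b0 ≠ 0 := by
    intro h
    apply hcross
    have h02 : a0*c1 - a1*c0 = 0 := by
      have := E1; rw [h] at this
      have h2 : t2*(a0*c1 - a1*c0) = 0 := by linarith
      exact (mul_eq_zero.mp h2).resolve_left (ne_of_gt ht2)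
    have h12 : b0*c1 - b1*c0 = 0 := by
      have := E2; rw [h] at this
      have h2 : t2*(b0*c1 - b1*c0) = 0 := by linarith
      exact (mul_eq_zero.mp h2).resolve_left (ne_of_gt ht2)
    linear_combination h + h12 - h02
  have habsW : 0 < |a0*b1 - a1*b0| := abs_pos.mpr hW
  -- abs relations
  have habs1 : t1 * |a0*b1 - a1*b0| = t2 * |a0*c1 - a1*c0| := by
    have h : t2*(a0*c1 - a1*c0) = -(t1*(a0*b1 - a1*b0)) := by linarith
    calc t1 * |a0*b1 - a1*b0| = |t1*(a0*b1 - a1*b0)| := by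
          rw [abs_mul, abs_of_pos ht1]
      _ = |t2*(a0*c1 - a1*c0)| := by rw [h, abs_neg]
      _ = t2 * |a0*c1 - a1*c0| := by rw [abs_mul, abs_of_pos ht2]
  have habs2 : t0 * |a0*b1 - a1*b0| = t2 * |b0*c1 - b1*c0| := by
    have h : t2*(b0*c1 - b1*c0) = t0*(a0*b1 - a1*b0) := by linarith
    calc t0 * |a0*b1 - a1*b0| = |t0*(a0*b1 - a1*b0)| := by
          rw [abs_mul, abs_of_pos ht0]
      _ = |t2*(b0*c1 - b1*c0)| := by rw [h]
      _ = t2 * |b0*c1 - b1*c0| := by rw [abs_mul, abs_of_pos ht2]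
  have hs01pos : 0 < s01 := by
    have h2 : 0 < s01 * (n0*n1) := hS01 ▸ habsW
    nlinarith [mul_pos hn0 hn1]
  refine ⟨hs01pos, ?_, ?_, ?_⟩
  · -- (t1*n1)*s01 = s02*(t2*n2)
    have e : ((t1*n1)*s01) * ((n0*n1)*(n0*n2)) = (s02*(t2*n2)) * ((n0*n1)*(n0*n2)) := by
      linear_combination (t1*n1*n0*n2)*hS01 - (t2*n2*n0*n1)*hS02 + (n0*n1*n2)*habs1
    exact mul_right_cancel₀ (by positivity) e
  · have e : ((t0*n0)*s01) * ((n0*n1)*(n1*n2)) = (s12*(t2*n2)) * ((n0*n1)*(n1*n2)) := by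
      linear_combination (t0*n0*n1*n2)*hS01 - (t2*n2*n0*n1)*hS12 + (n0*n1*n2)*habs2
    exact mul_right_cancel₀ (by positivity) e
  · have e : (s02*co1 + co2*s01) * ((n0*n1)*(n0*n2)*(n1*n2)*t2)
        = (-s12) * ((n0*n1)*(n0*n2)*(n1*n2)*t2) := by
      linear_combination (t2*co1*(n0*n1)*(n1*n2))*hS02 + (t2*(n1*n2)*|a0*c1 - a1*c0|)*hC01
        + (t2*s01*(n0*n1)*(n1*n2))*hC02 + (t2*(n1*n2)*(a0*c0+a1*c1))*hS01
        + (t2*(n0*n0)*(n1*n2))*hS12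
        - ((n1*n2)*(a0*b0+a1*b1))*habs1 - ((n1*n2)*(n0*n0))*habs2
        + ((n1*n2)*t0*|a0*b1 - a1*b0|)*hNN0 + ((n1*n2)*|a0*b1 - a1*b0|)*EIn
    exact mul_right_cancel₀ (by positivity) e

private lemma sin_angle_two (x y : EuclideanSpace ℝ (Fin 2)) :
    Real.sin (InnerProductGeometry.angle x y) * (‖x‖ * ‖y‖) = |x 0 * y 1 - x 1 * y 0| := by
  rw [InnerProductGeometry.sin_angle_mul_norm_mul_norm, inner_two, inner_two, inner_two,
    show (x 0*x 0+x 1*x 1)*(y 0*y 0+y 1*y 1) - (x 0*y 0+x 1*y 1)*(x 0*y 0+x 1*y 1)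
       = (x 0*y 1 - x 1*y 0)^2 by ring, Real.sqrt_sq_eq_abs]

private lemma cos_angle_two (x y : EuclideanSpace ℝ (Fin 2)) :
    Real.cos (InnerProductGeometry.angle x y) * (‖x‖ * ‖y‖) = x 0 * y 0 + x 1 * y 1 := by
  rw [InnerProductGeometry.cos_angle_mul_norm_mul_norm, inner_two]

/-- Negative answer to the inverse mixed weighted Fermat–Torricelli problem for three
non-collinear points: if `A₀` is interior to the triangle `A₁A₂A₃` and the positive
weights satisfy `B̄₁+B̄₂+B̄₃ = c`, `B̄₁+B̄₂ = B̄₃+B̄₀`, and `A₀` minimizes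
`X ↦ ∑ B̄ᵢ‖X − Aᵢ‖`, then the weights are given by explicit formulas depending on the
residual weight `B̄₀`. Indices are shifted: `A 0, A 1, A 2` are `A₁, A₂, A₃`. -/
theorem inverse_mixed_weighted_fermat_torricelli_triangle
    (A : Fin 3 → EuclideanSpace ℝ (Fin 2))
    (hA : AffineIndependent ℝ A)
    (A₀ : EuclideanSpace ℝ (Fin 2))
    (hA₀ : A₀ ∈ interior (convexHull ℝ (Set.range A)))
    (c B₀ : ℝ) (hc : 0 < c) (hB₀ : 0 ≤ B₀)
    (B : Fin 3 → ℝ) (hB : ∀ i, 0 < B i)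
    (hsum : B 0 + B 1 + B 2 = c)
    (hflow : B 0 + B 1 = B 2 + B₀)
    (hmin : ∀ X : EuclideanSpace ℝ (Fin 2),
      ∑ i, B i * ‖A₀ - A i‖ ≤ ∑ i, B i * ‖X - A i‖) :
    B 2 = (c - B₀) / 2 ∧
    B 1 = (Real.sin (∠ (A 0) A₀ (A 2)) / Real.sin (∠ (A 0) A₀ (A 1))) * ((c - B₀) / 2) ∧
    B 0 = -(Real.sin (∠ (A 0) A₀ (A 2) + ∠ (A 0) A₀ (A 1))
            / Real.sin (∠ (A 0) A₀ (A 1))) * ((c - B₀) / 2) ∧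
    B 0 = (Real.sin (∠ (A 1) A₀ (A 2)) / Real.sin (∠ (A 0) A₀ (A 1))) * ((c - B₀) / 2) := by
  classical
  have hG1 : B 2 = (c - B₀) / 2 := by linarith
  have hcard : Fintype.card (Fin 3) = Module.finrank ℝ (EuclideanSpace ℝ (Fin 2)) + 1 := by
    simp [finrank_euclideanSpace_fin]
  have htop : affineSpan ℝ (Set.range A) = ⊤ :=
    hA.affineSpan_eq_top_iff_card_eq_finrank_add_one.mpr hcard
  let b : AffineBasis (Fin 3) ℝ (EuclideanSpace ℝ (Fin 2)) := ⟨A, hA, htop⟩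
  have hA₀' : ∀ i, 0 < b.coord i A₀ := by
    have h := b.interior_convexHull
    have h2 : A₀ ∈ {x | ∀ i, 0 < b.coord i x} := by rw [← h]; exact hA₀
    exact h2
  have hne : ∀ i, A₀ - A i ≠ 0 := by
    intro i h
    have h2 : A₀ = A i := sub_eq_zero.mp h
    obtain ⟨j, hj⟩ := exists_ne i
    have hpos := hA₀' j
    rw [h2] at hpos
    have hz : b.coord j (A i) = 0 := b.coord_apply_ne hj
    rw [hz] at hpos
    exact lt_irrefl _ hpos
  have hnorm : ∀ i, (0:ℝ) < ‖A₀ - A i‖ := fun i => norm_pos_iff.mpr (hne i)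
  have hder : HasFDerivAt (fun X : EuclideanSpace ℝ (Fin 2) => ∑ i, B i * ‖X - A i‖)
      (∑ i : Fin 3, B i • (‖A₀ - A i‖⁻¹ • innerSL ℝ (A₀ - A i))) A₀ :=
    HasFDerivAt.fun_sum fun i _ => ((hasFDerivAt_norm_sub (A i) A₀ (hne i)).const_mul (B i))
  have hloc : IsLocalMin (fun X : EuclideanSpace ℝ (Fin 2) => ∑ i, B i * ‖X - A i‖) A₀ :=
    Filter.Eventually.of_forall hmin
  have hzero := hloc.hasFDerivAt_eq_zero hder
  have heq : ∀ y : EuclideanSpace ℝ (Fin 2),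
      ∑ i, B i * (‖A₀ - A i‖⁻¹ * (inner ℝ (A₀ - A i) y : ℝ)) = 0 := by
    intro y
    have h := DFunLike.congr_fun hzero y
    simp only [ContinuousLinearMap.sum_apply, ContinuousLinearMap.smul_apply, innerSL_apply_apply,
      smul_eq_mul, ContinuousLinearMap.zero_apply] at h
    exact h
  have hP0 := heq (EuclideanSpace.single 0 1)
  have hP1 := heq (EuclideanSpace.single 1 1)
  simp only [inner_two, EuclideanSpace.single_apply, Fin.sum_univ_three, PiLp.sub_apply] at hP0 hP1
  norm_num at hP0 hP1
  have hang : ∀ i j : Fin 3, ∠ (A i) A₀ (A j)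
      = InnerProductGeometry.angle (A₀ - A i) (A₀ - A j) := by
    intro i j
    rw [EuclideanGeometry.angle, vsub_eq_sub, vsub_eq_sub, ← neg_sub A₀ (A i), ← neg_sub A₀ (A j),
      InnerProductGeometry.angle_neg_neg]
  have hS01 := sin_angle_two (A₀ - A 0) (A₀ - A 1)
  have hS02 := sin_angle_two (A₀ - A 0) (A₀ - A 2)
  have hS12 := sin_angle_two (A₀ - A 1) (A₀ - A 2)
  have hC01 := cos_angle_two (A₀ - A 0) (A₀ - A 1)
  have hC02 := cos_angle_two (A₀ - A 0) (A₀ - A 2)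
  simp only [PiLp.sub_apply] at hS01 hS02 hS12 hC01 hC02
  have hNN0 : ‖A₀ - A 0‖ * ‖A₀ - A 0‖
      = (A₀ 0 - A 0 0)*(A₀ 0 - A 0 0) + (A₀ 1 - A 0 1)*(A₀ 1 - A 0 1) := by
    rw [← real_inner_self_eq_norm_mul_norm, inner_two]
    simp [PiLp.sub_apply]
  have hcross := cross_ne_zero_of_affineIndependent hA
  simp only [PiLp.sub_apply] at hcross
  have hcross' : ((A₀ 0 - A 0 0) - (A₀ 0 - A 1 0)) * ((A₀ 1 - A 0 1) - (A₀ 1 - A 2 1))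
      - ((A₀ 1 - A 0 1) - (A₀ 1 - A 1 1)) * ((A₀ 0 - A 0 0) - (A₀ 0 - A 2 0)) ≠ 0 :=
    fun h => hcross (by linear_combination h)
  have hP0' : (B 0 / ‖A₀ - A 0‖) * (A₀ 0 - A 0 0) + (B 1 / ‖A₀ - A 1‖) * (A₀ 0 - A 1 0)
      + (B 2 / ‖A₀ - A 2‖) * (A₀ 0 - A 2 0) = 0 := by
    linear_combination hP0
  have hP1' : (B 0 / ‖A₀ - A 0‖) * (A₀ 1 - A 0 1) + (B 1 / ‖A₀ - A 1‖) * (A₀ 1 - A 1 1)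
      + (B 2 / ‖A₀ - A 2‖) * (A₀ 1 - A 2 1) = 0 := by
    linear_combination hP1
  obtain ⟨hs01pos, hK2, hK3, hK4⟩ := key_algebra
    (B 0 / ‖A₀ - A 0‖) (B 1 / ‖A₀ - A 1‖) (B 2 / ‖A₀ - A 2‖)
    ‖A₀ - A 0‖ ‖A₀ - A 1‖ ‖A₀ - A 2‖
    (A₀ 0 - A 0 0) (A₀ 1 - A 0 1) (A₀ 0 - A 1 0) (A₀ 1 - A 1 1) (A₀ 0 - A 2 0) (A₀ 1 - A 2 1)
    (Real.sin (InnerProductGeometry.angle (A₀ - A 0) (A₀ - A 1)))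
    (Real.sin (InnerProductGeometry.angle (A₀ - A 0) (A₀ - A 2)))
    (Real.sin (InnerProductGeometry.angle (A₀ - A 1) (A₀ - A 2)))
    (Real.cos (InnerProductGeometry.angle (A₀ - A 0) (A₀ - A 1)))
    (Real.cos (InnerProductGeometry.angle (A₀ - A 0) (A₀ - A 2)))
    (div_pos (hB 0) (hnorm 0)) (div_pos (hB 1) (hnorm 1)) (div_pos (hB 2) (hnorm 2))
    (hnorm 0) (hnorm 1) (hnorm 2) hP0' hP1' hNN0 hS01 hS02 hS12 hC01 hC02 hcross'
  have hB0n : B 0 / ‖A₀ - A 0‖ * ‖A₀ - A 0‖ = B 0 := div_mul_cancel₀ _ (ne_of_gt (hnorm 0))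
  have hB1n : B 1 / ‖A₀ - A 1‖ * ‖A₀ - A 1‖ = B 1 := div_mul_cancel₀ _ (ne_of_gt (hnorm 1))
  have hB2n : B 2 / ‖A₀ - A 2‖ * ‖A₀ - A 2‖ = B 2 := div_mul_cancel₀ _ (ne_of_gt (hnorm 2))
  rw [hB1n] at hK2
  rw [hB0n] at hK3
  rw [hB2n] at hK2 hK3
  have hs01ne : Real.sin (InnerProductGeometry.angle (A₀ - A 0) (A₀ - A 1)) ≠ 0 :=
    ne_of_gt hs01pos
  refine ⟨hG1, ?_, ?_, ?_⟩
  · rw [hang 0 2, hang 0 1, ← hG1, div_mul_eq_mul_div, eq_div_iff hs01ne]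
    linarith
  · rw [hang 0 2, hang 0 1, ← hG1, Real.sin_add, hK4]
    rw [neg_div, neg_neg, div_mul_eq_mul_div, eq_div_iff hs01ne]
    linarith
  · rw [hang 1 2, hang 0 1, ← hG1, div_mul_eq_mul_div, eq_div_iff hs01ne]
    linarith
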